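/- Let R be a Łukasiewicz near semiring with involution α. Define p(x,y,z) = α((α(x·α(y))·α(z)) + (α(z·α(y))·α(x))). Then p is a Mal'cev term: p(x,y,y) = x and p(x,x,y) = y for all x, y ∈ R. (Consequently the variety of Łukasiewicz near semirings is congruence permutable.) -/
import Mathlib


/-- A near semiring: ⟨R, +, ·, 0, 1⟩ with ⟨R, +, 0⟩ a commutative monoid,
⟨R, ·, 1⟩ a unital groupoid, right distributivity, and 0 annihilating. -/
structure NearSemiring (R : Type*) where
  add : R → R → R
  mul : R → R → R
  zero : R
  one : R
  add_assoc : ∀ x y z : R, add (add x y) z = add x (add y z)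
  add_comm : ∀ x y : R, add x y = add y x
  add_zero : ∀ x : R, add x zero = x
  mul_one : ∀ x : R, mul x one = x
  one_mul : ∀ x : R, mul one x = x
  right_distrib : ∀ x y z : R, mul (add x y) z = add (mul x z) (mul y z)
  mul_zero : ∀ x : R, mul x zero = zero
  zero_mul : ∀ x : R, mul zero x = zero

/-- The induced relation: x ≤ y iff x + y = y. -/
def NearSemiring.le {R : Type*} (S : NearSemiring R) (x y : R) : Prop :=
  S.add x y = y

/-- An involutive near semiring: an idempotent near semiring with an
antitone involution α (antitone w.r.t. the order x ≤ y iff x + y = y). -/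
structure InvNearSemiring (R : Type*) extends NearSemiring R where
  add_idem : ∀ x : R, add x x = x
  alpha : R → R
  alpha_alpha : ∀ x : R, alpha (alpha x) = x
  alpha_antitone : ∀ x y : R, add x y = y → add (alpha y) (alpha x) = alpha x

/-- A Łukasiewicz near semiring: an involutive near semiring satisfying (Ł). -/
structure LukNearSemiring (R : Type*) extends InvNearSemiring R where
  luk : ∀ x y : R,
    mul (alpha (mul x (alpha y))) (alpha y) = mul (alpha (mul y (alpha x))) (alpha x)


section Aux
variable {R : Type*} (S : LukNearSemiring R)

/-- Everything is below α(0). -/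
lemma luk_le_top (x : R) : S.add x (S.alpha S.zero) = S.alpha S.zero := by
  have h0 : S.add S.zero (S.alpha x) = S.alpha x := by
    rw [S.add_comm, S.add_zero]
  have := S.alpha_antitone S.zero (S.alpha x) h0
  rwa [S.alpha_alpha] at this

/-- Monotonicity of multiplication in the first argument. -/
lemma luk_mono {a b : R} (h : S.add a b = b) (c : R) :
    S.add (S.mul a c) (S.mul b c) = S.mul b c := by
  rw [← S.right_distrib, h]

/-- α(1) = 0. -/
lemma luk_alpha_one : S.alpha S.one = S.zero := by
  set e := S.alpha S.one with he
  -- t·e = 0 where t = α0, from (Ł) with x=0, y=1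
  have hte : S.mul (S.alpha S.zero) e = S.zero := by
    have h := S.luk S.zero S.one
    rwa [S.zero_mul, S.one_mul, S.alpha_alpha, S.zero_mul] at h
  -- (C): α(e·z)·z = z, from (Ł) with x = e, y = αz
  have hC : ∀ z : R, S.mul (S.alpha (S.mul e z)) z = z := by
    intro z
    have h := S.luk e (S.alpha z)
    simp only [he, S.alpha_alpha, S.mul_one] at h ⊢
    exact h
  -- hence z ≤ t·z
  have hle : ∀ z : R, S.add z (S.mul (S.alpha S.zero) z) = S.mul (S.alpha S.zero) z := by
    intro z
    have := luk_mono S (luk_le_top S (S.alpha (S.mul e z))) z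
    rwa [hC z] at this
  have := hle e
  rwa [hte, S.add_zero] at this

/-- α(0) = 1. -/
lemma luk_alpha_zero : S.alpha S.zero = S.one := by
  rw [← luk_alpha_one S, S.alpha_alpha]

/-- x · α(x) = 0. -/
lemma luk_mul_alpha (y : R) : S.mul y (S.alpha y) = S.zero := by
  have h := S.luk (S.alpha S.zero) y
  simp only [luk_alpha_zero S, S.one_mul, S.alpha_alpha, luk_alpha_one S,
    S.mul_zero, S.zero_mul] at h
  exact h

/-- a·c ≤ c. -/
lemma luk_mul_le (a c : R) : S.add (S.mul a c) c = c := by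
  have h1 : S.add a S.one = S.one := by
    have := luk_le_top S a; rwa [luk_alpha_zero S] at this
  have := luk_mono S h1 c
  rwa [S.one_mul] at this

end Aux

/-- The term p(x,y,z) = α((α(x·α(y))·α(z)) + (α(z·α(y))·α(x))) is a Mal'cev
term for Łukasiewicz near semirings: p(x,y,y) = x and p(x,x,y) = y. -/
theorem lukNearSemiring_malcev {R : Type*} (S : LukNearSemiring R) :
    (∀ x y : R,
      S.alpha (S.add (S.mul (S.alpha (S.mul x (S.alpha y))) (S.alpha y))
                     (S.mul (S.alpha (S.mul y (S.alpha y))) (S.alpha x))) = x) ∧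
    (∀ x y : R,
      S.alpha (S.add (S.mul (S.alpha (S.mul x (S.alpha x))) (S.alpha y))
                     (S.mul (S.alpha (S.mul y (S.alpha x))) (S.alpha x))) = y) := by
  constructor
  · intro x y
    rw [luk_mul_alpha S y, luk_alpha_zero S, S.one_mul, S.luk x y,
      luk_mul_le S (S.alpha (S.mul y (S.alpha x))) (S.alpha x), S.alpha_alpha]
  · intro x y
    rw [luk_mul_alpha S x, luk_alpha_zero S, S.one_mul, S.luk y x, S.add_comm,
      luk_mul_le S (S.alpha (S.mul x (S.alpha y))) (S.alpha y), S.alpha_alpha]
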